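/- For every κ > 0 there is a constant C(κ) > 0 such that for every continuously differentiable function v : ℝ² → ℂ, ∫_{ℝ²} |v(y)|² e^{−κ|y|} dy ≤ C(κ) ( ∫_{ℝ²} |∇v(y)|² dy + ∫_{|y| ≤ 1} |v(y)|² e^{−|y|} dy ), the inequality being interpreted in [0,∞]. -/

import Mathlib

open MeasureTheory
open scoped ENNReal NNReal

noncomputable section

abbrev E2 := EuclideanSpace ℝ (Fin 2)

open Set Real
open scoped Interval

namespace WL2

def phi : (ℝ × ℝ) ≃L[ℝ] E2 :=
  (ContinuousLinearEquiv.finTwoArrow ℝ ℝ).symm.trans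
    (EuclideanSpace.equiv (Fin 2) ℝ).symm

lemma phi_apply_zero (p : ℝ × ℝ) : (phi p : Fin 2 → ℝ) 0 = p.1 := rfl
lemma phi_apply_one (p : ℝ × ℝ) : (phi p : Fin 2 → ℝ) 1 = p.2 := rfl

lemma norm_phi_sq (p : ℝ × ℝ) : ‖phi p‖ ^ 2 = p.1 ^ 2 + p.2 ^ 2 := by
  rw [EuclideanSpace.norm_eq]
  rw [Real.sq_sqrt (by positivity)]
  simp [Fin.sum_univ_two, phi_apply_zero, phi_apply_one, sq_abs]

lemma norm_phi_e1 : ‖phi (1, 0)‖ = 1 := by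
  have h := norm_phi_sq (1, 0)
  norm_num at h
  rcases h with h | h
  · exact h
  · linarith [norm_nonneg (phi (1, 0))]

lemma norm_phi_e2 : ‖phi (0, 1)‖ = 1 := by
  have h := norm_phi_sq (0, 1)
  norm_num at h
  rcases h with h | h
  · exact h
  · linarith [norm_nonneg (phi (0, 1))]

variable {v : E2 → ℂ}

lemma hasDerivAt_horiz (hv : ContDiff ℝ 1 v) (x₂ u : ℝ) :
    HasDerivAt (fun t => v (phi (t, x₂))) (fderiv ℝ v (phi (u, x₂)) (phi (1, 0))) u := by
  have hline : HasDerivAt (fun t : ℝ => (t, x₂)) ((1 : ℝ), (0 : ℝ)) u :=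
    (hasDerivAt_id u).prodMk (hasDerivAt_const u x₂)
  have hphi : HasDerivAt (fun t : ℝ => phi (t, x₂)) (phi (1, 0)) u :=
    (phi.toContinuousLinearMap.hasFDerivAt).comp_hasDerivAt u hline
  exact ((hv.differentiable one_ne_zero) (phi (u, x₂))).hasFDerivAt.comp_hasDerivAt u hphi

lemma hasDerivAt_vert (hv : ContDiff ℝ 1 v) (a t : ℝ) :
    HasDerivAt (fun s => v (phi (a, s))) (fderiv ℝ v (phi (a, t)) (phi (0, 1))) t := by
  have hline : HasDerivAt (fun s : ℝ => (a, s)) ((0 : ℝ), (1 : ℝ)) t :=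
    (hasDerivAt_const t a).prodMk (hasDerivAt_id t)
  have hphi : HasDerivAt (fun s : ℝ => phi (a, s)) (phi (0, 1)) t :=
    (phi.toContinuousLinearMap.hasFDerivAt).comp_hasDerivAt t hline
  exact ((hv.differentiable one_ne_zero) (phi (a, t))).hasFDerivAt.comp_hasDerivAt t hphi

lemma cont_deriv (hv : ContDiff ℝ 1 v) (w : ℝ × ℝ → ℝ × ℝ) (hw : Continuous w)
    (e : ℝ × ℝ) : Continuous (fun p : ℝ × ℝ => fderiv ℝ v (phi (w p)) (phi e)) :=
  ((hv.continuous_fderiv one_ne_zero).comp (phi.continuous.comp hw)).clm_apply continuous_const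

lemma ftc_horiz (hv : ContDiff ℝ 1 v) (x₁ x₂ a : ℝ) :
    v (phi (x₁, x₂)) - v (phi (a, x₂))
      = ∫ u in a..x₁, fderiv ℝ v (phi (u, x₂)) (phi (1, 0)) := by
  rw [intervalIntegral.integral_eq_sub_of_hasDerivAt
    (fun u _ => hasDerivAt_horiz hv x₂ u) ?_]
  exact ((cont_deriv hv (fun p => (p.1, x₂)) (by fun_prop) (1, 0)).comp
    (Continuous.prodMk_left 0)).intervalIntegrable a x₁

lemma ftc_vert (hv : ContDiff ℝ 1 v) (a s x₂ : ℝ) :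
    v (phi (a, x₂)) - v (phi (a, s))
      = ∫ t in s..x₂, fderiv ℝ v (phi (a, t)) (phi (0, 1)) := by
  rw [intervalIntegral.integral_eq_sub_of_hasDerivAt
    (fun t _ => hasDerivAt_vert hv a t) ?_]
  exact ((cont_deriv hv (fun p => (a, p.2)) (by fun_prop) (0, 1)).comp
    (Continuous.prodMk_right a)).intervalIntegrable s x₂

lemma cont_g1 (hv : ContDiff ℝ 1 v) (x₂ : ℝ) :
    Continuous fun u : ℝ => fderiv ℝ v (phi (u, x₂)) (phi (1, 0)) :=
  ((hv.continuous_fderiv one_ne_zero).comp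
    (phi.continuous.comp (by fun_prop : Continuous fun u : ℝ => (u, x₂)))).clm_apply
    continuous_const

lemma cont_g2 (hv : ContDiff ℝ 1 v) (a : ℝ) :
    Continuous fun t : ℝ => fderiv ℝ v (phi (a, t)) (phi (0, 1)) :=
  ((hv.continuous_fderiv one_ne_zero).comp
    (phi.continuous.comp (by fun_prop : Continuous fun t : ℝ => (a, t)))).clm_apply
    continuous_const

lemma nnnorm_sq_eq (z : ℂ) : (‖z‖₊ : ℝ≥0∞) ^ 2 = ENNReal.ofReal (‖z‖ ^ 2) := by
  rw [← enorm_eq_nnnorm, ← ofReal_norm, ← ENNReal.ofReal_pow (norm_nonneg z)]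

lemma lintegral_sq_le {f : ℝ → ℝ≥0∞} (hf : Measurable f) (s : Set ℝ) :
    (∫⁻ t in s, f t) ^ 2 ≤ volume s * ∫⁻ t in s, f t ^ 2 := by
  have hpq : Real.HolderConjugate 2 2 := Real.HolderConjugate.two_two
  have H := ENNReal.lintegral_mul_le_Lp_mul_Lq (volume.restrict s) hpq
    hf.aemeasurable (aemeasurable_const (b := (1:ℝ≥0∞)))
  simp only [Pi.mul_apply, mul_one, ENNReal.one_rpow, lintegral_const,
    Measure.restrict_apply MeasurableSet.univ, univ_inter, one_mul] at H
  calc (∫⁻ t in s, f t) ^ 2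
      ≤ ((∫⁻ t in s, f t ^ (2:ℝ)) ^ (1/(2:ℝ)) * (volume s) ^ (1/(2:ℝ))) ^ 2 :=
        pow_le_pow_left' H 2
    _ = (∫⁻ t in s, f t ^ 2) * volume s := by
        rw [mul_pow, ← ENNReal.rpow_natCast ((∫⁻ t in s, f t ^ (2:ℝ)) ^ (1/(2:ℝ))) 2,
          ← ENNReal.rpow_natCast ((volume s) ^ (1/(2:ℝ))) 2,
          ← ENNReal.rpow_mul, ← ENNReal.rpow_mul]
        norm_num
    _ = volume s * ∫⁻ t in s, f t ^ 2 := mul_comm _ _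

lemma uIoc_vol_le (a b : ℝ) (ha : |a| ≤ 1) : volume (Ι a b) ≤ ENNReal.ofReal (|b| + 1) := by
  rw [Set.uIoc, Real.volume_Ioc]
  refine ENNReal.ofReal_le_ofReal ?_
  have h := abs_sub_abs_le_abs_sub a b
  cases le_total a b with
  | inl h' => rw [min_eq_left h', max_eq_right h']; cases abs_cases a <;> cases abs_cases b <;> linarith
  | inr h' => rw [min_eq_right h', max_eq_left h']; cases abs_cases a <;> cases abs_cases b <;> linarith

lemma sq3 {n A B C : ℝ} (hn : 0 ≤ n) (hA : 0 ≤ A) (hB : 0 ≤ B) (hC : 0 ≤ C)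
    (h : n ≤ A + B + C) : n ^ 2 ≤ 3 * A ^ 2 + 3 * B ^ 2 + 3 * C ^ 2 := by
  nlinarith [sq_nonneg (A - B), sq_nonneg (A - C), sq_nonneg (B - C),
    mul_le_mul h h hn (by linarith)]

lemma key_pointwise (hv : ContDiff ℝ 1 v) (x₁ x₂ a s : ℝ) (ha : |a| ≤ 1) (hs : |s| ≤ 1) :
    (‖v (phi (x₁, x₂))‖₊ : ℝ≥0∞) ^ 2 ≤
      3 * (‖v (phi (a, s))‖₊ : ℝ≥0∞) ^ 2
      + 3 * ENNReal.ofReal (|x₂| + 1)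
          * (∫⁻ t : ℝ, (‖fderiv ℝ v (phi (a, t))‖₊ : ℝ≥0∞) ^ 2)
      + 3 * ENNReal.ofReal (|x₁| + 1)
          * (∫⁻ u : ℝ, (‖fderiv ℝ v (phi (u, x₂))‖₊ : ℝ≥0∞) ^ 2) := by
  set g1 : ℝ → ℂ := fun u => fderiv ℝ v (phi (u, x₂)) (phi (1, 0)) with hg1
  set g2 : ℝ → ℂ := fun t => fderiv ℝ v (phi (a, t)) (phi (0, 1)) with hg2
  have hg1c : Continuous g1 := cont_g1 hv x₂
  have hg2c : Continuous g2 := cont_g2 hv a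
  have hA : v (phi (x₁, x₂))
      = v (phi (a, s)) + (∫ t in s..x₂, g2 t) + (∫ u in a..x₁, g1 u) := by
    have h1 := ftc_horiz hv x₁ x₂ a
    have h2 := ftc_vert hv a s x₂
    linear_combination h1 + h2
  set A := ‖v (phi (a, s))‖ with hAdef
  set B2 := ∫ t in Ι s x₂, ‖g2 t‖ with hB2def
  set B1 := ∫ u in Ι a x₁, ‖g1 u‖ with hB1def
  have hB2nn : 0 ≤ B2 := setIntegral_nonneg measurableSet_uIoc fun t _ => norm_nonneg _
  have hB1nn : 0 ≤ B1 := setIntegral_nonneg measurableSet_uIoc fun t _ => norm_nonneg _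
  have hnorm : ‖v (phi (x₁, x₂))‖ ≤ A + B2 + B1 := by
    rw [hA]
    refine le_trans (norm_add_le _ _) (add_le_add (le_trans (norm_add_le _ _)
      (add_le_add le_rfl ?_)) ?_)
    · exact intervalIntegral.norm_integral_le_integral_norm_uIoc
    · exact intervalIntegral.norm_integral_le_integral_norm_uIoc
  have hreal : ‖v (phi (x₁, x₂))‖ ^ 2 ≤ 3 * A ^ 2 + 3 * B2 ^ 2 + 3 * B1 ^ 2 := by
    exact sq3 (norm_nonneg _) (norm_nonneg _) hB2nn hB1nn hnorm
  have key : (‖v (phi (x₁, x₂))‖₊ : ℝ≥0∞) ^ 2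
      ≤ ENNReal.ofReal (3 * A ^ 2) + ENNReal.ofReal (3 * B2 ^ 2)
        + ENNReal.ofReal (3 * B1 ^ 2) := by
    rw [nnnorm_sq_eq]
    refine le_trans (ENNReal.ofReal_le_ofReal hreal) ?_
    exact le_trans ENNReal.ofReal_add_le (add_le_add ENNReal.ofReal_add_le le_rfl)
  refine key.trans (add_le_add (add_le_add ?_ ?_) ?_)
  · rw [ENNReal.ofReal_mul (by norm_num : (0:ℝ) ≤ 3), nnnorm_sq_eq, ENNReal.ofReal_ofNat]
  · -- B2 term
    have hint : IntegrableOn (fun t => ‖g2 t‖) (Ι s x₂) := hg2c.norm.integrableOn_uIoc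
    have hofB2 : ENNReal.ofReal B2 = ∫⁻ t in Ι s x₂, (‖g2 t‖₊ : ℝ≥0∞) := by
      rw [hB2def, ofReal_integral_eq_lintegral_ofReal hint
        (Filter.Eventually.of_forall fun t => norm_nonneg _)]
      exact lintegral_congr fun t => (ofReal_norm (g2 t)).trans (enorm_eq_nnnorm _)
    calc ENNReal.ofReal (3 * B2 ^ 2) = 3 * (ENNReal.ofReal B2) ^ 2 := by
          rw [ENNReal.ofReal_mul (by norm_num : (0:ℝ) ≤ 3), ENNReal.ofReal_pow hB2nn,
            ENNReal.ofReal_ofNat]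
      _ ≤ 3 * (volume (Ι s x₂) * ∫⁻ t in Ι s x₂, (‖g2 t‖₊ : ℝ≥0∞) ^ 2) := by
          rw [hofB2]
          exact mul_le_mul_right (lintegral_sq_le (hg2c.nnnorm.measurable.coe_nnreal_ennreal) _) 3
      _ ≤ 3 * (ENNReal.ofReal (|x₂| + 1)
            * ∫⁻ t : ℝ, (‖fderiv ℝ v (phi (a, t))‖₊ : ℝ≥0∞) ^ 2) := by
          refine mul_le_mul_right (mul_le_mul (uIoc_vol_le s x₂ hs) ?_ zero_le zero_le) 3
          refine le_trans (setLIntegral_le_lintegral _ _) (lintegral_mono fun t => ?_)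
          refine pow_le_pow_left' ?_ 2
          rw [← enorm_eq_nnnorm, ← ofReal_norm, ← enorm_eq_nnnorm, ← ofReal_norm]
          refine ENNReal.ofReal_le_ofReal ?_
          simpa [norm_phi_e2] using (fderiv ℝ v (phi (a, t))).le_opNorm (phi (0, 1))
      _ = 3 * ENNReal.ofReal (|x₂| + 1)
            * ∫⁻ t : ℝ, (‖fderiv ℝ v (phi (a, t))‖₊ : ℝ≥0∞) ^ 2 := by ring
  · -- B1 term
    have hint : IntegrableOn (fun u => ‖g1 u‖) (Ι a x₁) := hg1c.norm.integrableOn_uIoc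
    have hofB1 : ENNReal.ofReal B1 = ∫⁻ u in Ι a x₁, (‖g1 u‖₊ : ℝ≥0∞) := by
      rw [hB1def, ofReal_integral_eq_lintegral_ofReal hint
        (Filter.Eventually.of_forall fun t => norm_nonneg _)]
      exact lintegral_congr fun t => (ofReal_norm (g1 t)).trans (enorm_eq_nnnorm _)
    calc ENNReal.ofReal (3 * B1 ^ 2) = 3 * (ENNReal.ofReal B1) ^ 2 := by
          rw [ENNReal.ofReal_mul (by norm_num : (0:ℝ) ≤ 3), ENNReal.ofReal_pow hB1nn,
            ENNReal.ofReal_ofNat]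
      _ ≤ 3 * (volume (Ι a x₁) * ∫⁻ u in Ι a x₁, (‖g1 u‖₊ : ℝ≥0∞) ^ 2) := by
          rw [hofB1]
          exact mul_le_mul_right (lintegral_sq_le (hg1c.nnnorm.measurable.coe_nnreal_ennreal) _) 3
      _ ≤ 3 * (ENNReal.ofReal (|x₁| + 1)
            * ∫⁻ u : ℝ, (‖fderiv ℝ v (phi (u, x₂))‖₊ : ℝ≥0∞) ^ 2) := by
          refine mul_le_mul_right (mul_le_mul ?_ ?_ zero_le zero_le) 3
          · exact uIoc_vol_le a x₁ ha
          refine le_trans (setLIntegral_le_lintegral _ _) (lintegral_mono fun u => ?_)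
          refine pow_le_pow_left' ?_ 2
          rw [← enorm_eq_nnnorm, ← ofReal_norm, ← enorm_eq_nnnorm, ← ofReal_norm]
          refine ENNReal.ofReal_le_ofReal ?_
          simpa [norm_phi_e1] using (fderiv ℝ v (phi (u, x₂))).le_opNorm (phi (1, 0))
      _ = 3 * ENNReal.ofReal (|x₁| + 1)
            * ∫⁻ u : ℝ, (‖fderiv ℝ v (phi (u, x₂))‖₊ : ℝ≥0∞) ^ 2 := by ring

def psi : E2 ≃ᵐ (ℝ × ℝ) :=
  (MeasurableEquiv.toLp 2 (Fin 2 → ℝ)).symm.trans MeasurableEquiv.finTwoArrow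

lemma psi_mp : MeasurePreserving psi volume volume :=
  (EuclideanSpace.volume_preserving_symm_measurableEquiv_toLp (Fin 2)).trans
    (measurePreserving_finTwoArrow volume)

lemma psi_symm_eq (p : ℝ × ℝ) : psi.symm p = phi p := rfl

lemma norm_phi_ge (p : ℝ × ℝ) : (|p.1| + |p.2|) / 2 ≤ ‖phi p‖ := by
  have h := norm_phi_sq p
  have h2 : ((|p.1| + |p.2|) / 2) ^ 2 ≤ ‖phi p‖ ^ 2 := by
    rw [h]; nlinarith [sq_nonneg (|p.1| - |p.2|), sq_abs p.1, sq_abs p.2]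
  have := Real.sqrt_le_sqrt h2
  rwa [Real.sqrt_sq (by positivity), Real.sqrt_sq (norm_nonneg _)] at this

lemma norm_phi_le (p : ℝ × ℝ) : ‖phi p‖ ≤ |p.1| + |p.2| := by
  have h := norm_phi_sq p
  have h2 : ‖phi p‖ ^ 2 ≤ (|p.1| + |p.2|) ^ 2 := by
    rw [h]; nlinarith [abs_nonneg p.1, abs_nonneg p.2, sq_abs p.1, sq_abs p.2]
  have := Real.sqrt_le_sqrt h2
  rwa [Real.sqrt_sq (norm_nonneg _), Real.sqrt_sq (by positivity)] at this

lemma integrable_weight {c : ℝ} (hc : 0 < c) :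
    Integrable (fun t : ℝ => (|t| + 1) * Real.exp (-(c * |t|))) := by
  have h0 : IntegrableOn (fun t : ℝ => (|t| + 1) * Real.exp (-(c * |t|))) (Ioi 0) := by
    have h1 : IntegrableOn (fun t : ℝ => Real.exp (-c * t)) (Ioi 0) :=
      exp_neg_integrableOn_Ioi 0 hc
    have h2 : IntegrableOn (fun t : ℝ => t * Real.exp (-c * t)) (Ioi 0) := by
      have := integrableOn_rpow_mul_exp_neg_mul_rpow (s := 1) (p := 1)
        (by norm_num) one_pos hc
      refine this.congr_fun (fun x hx => ?_) measurableSet_Ioi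
      simp [Real.rpow_one]
    refine IntegrableOn.congr_fun (h2.add h1) (fun x hx => ?_) measurableSet_Ioi
    have hx' : (0:ℝ) < x := hx
    simp only [Pi.add_apply]
    rw [abs_of_pos hx']
    ring_nf
  have h0' : IntegrableOn (fun t : ℝ => (|t| + 1) * Real.exp (-(c * |t|))) (Ici 0) := by
    rwa [integrableOn_Ici_iff_integrableOn_Ioi]
  have hneg : IntegrableOn (fun t : ℝ => (|t| + 1) * Real.exp (-(c * |t|))) (Iio 0) := by
    have := (Measure.measurePreserving_neg (volume : Measure ℝ)).integrableOn_comp_preimage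
      (Homeomorph.neg ℝ).measurableEmbedding
      (f := fun t : ℝ => (|t| + 1) * Real.exp (-(c * |t|))) (s := Ioi 0)
    rw [← this] at h0
    have hs : (Neg.neg ⁻¹' Ioi (0:ℝ)) = Iio 0 := by ext x; simp
    rw [hs] at h0
    refine h0.congr_fun (fun x hx => ?_) measurableSet_Iio
    simp [abs_neg]
  have := hneg.union h0'
  rwa [Iio_union_Ici, integrableOn_univ] at this

lemma lint_weight_lt_top {c : ℝ} (hc : 0 < c) :
    (∫⁻ t : ℝ, ENNReal.ofReal ((|t| + 1) * Real.exp (-(c * |t|)))) < ∞ :=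
  (integrable_weight hc).lintegral_lt_top

lemma lint_exp_lt_top {c : ℝ} (hc : 0 < c) :
    (∫⁻ t : ℝ, ENNReal.ofReal (Real.exp (-(c * |t|)))) < ∞ := by
  refine lt_of_le_of_lt (lintegral_mono fun t => ENNReal.ofReal_le_ofReal ?_)
    (lint_weight_lt_top hc)
  nlinarith [abs_nonneg t, Real.exp_pos (-(c * |t|))]

end WL2

open WL2

/-- Weighted `L²` estimate: for every `κ > 0` there is `C(κ) > 0` such that
`∫ |v|² e^{-κ|y|} ≤ C(κ) (∫ |∇v|² + ∫_{|y|≤1} |v|² e^{-|y|})` for all `C¹`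
functions `v : ℝ² → ℂ`, the inequality interpreted in `[0,∞]`. -/
theorem weighted_L2_by_gradient (κ : ℝ) (hκ : 0 < κ) :
    ∃ C : ℝ, 0 < C ∧ ∀ v : E2 → ℂ, ContDiff ℝ 1 v →
      (∫⁻ y : E2, (‖v y‖₊ : ℝ≥0∞) ^ 2 * ENNReal.ofReal (Real.exp (-κ * ‖y‖)))
        ≤ ENNReal.ofReal C *
          ((∫⁻ y : E2, (‖fderiv ℝ v y‖₊ : ℝ≥0∞) ^ 2) +
            ∫⁻ y in {y : E2 | ‖y‖ ≤ 1},
              (‖v y‖₊ : ℝ≥0∞) ^ 2 * ENNReal.ofReal (Real.exp (-‖y‖))) := by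
  set c : ℝ := κ / 2 with hcdef
  have hc : 0 < c := by positivity
  set w : ℝ → ℝ≥0∞ := fun t => ENNReal.ofReal (Real.exp (-(c * |t|))) with hw
  have mw : Measurable w :=
    (Real.continuous_exp.comp (continuous_const.mul continuous_abs).neg).measurable.ennreal_ofReal
  have hwle1 : ∀ t, w t ≤ 1 := fun t => by
    rw [hw]
    simp only
    rw [← ENNReal.ofReal_one]
    exact ENNReal.ofReal_le_ofReal (Real.exp_le_one_iff.2 (neg_nonpos.2 (by positivity)))
  set Ac := ∫⁻ t : ℝ, ENNReal.ofReal ((|t| + 1) * Real.exp (-(c * |t|))) with hAc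
  set Bc := ∫⁻ t : ℝ, w t with hBc
  have hAc_fin : Ac ≠ ∞ := (lint_weight_lt_top hc).ne
  have hBc_fin : Bc ≠ ∞ := (lint_exp_lt_top hc).ne
  set M : ℝ≥0∞ := 3 * (Bc * Bc) * ENNReal.ofReal (Real.exp 1) + (3 * (Bc * Ac) + 3 * Ac)
    with hM
  have hM_fin : M ≠ ∞ := by finiteness
  refine ⟨M.toReal + 1, by positivity, fun v hv => ?_⟩
  have hMC : M ≤ ENNReal.ofReal (M.toReal + 1) := by
    rw [ENNReal.ofReal_add ENNReal.toReal_nonneg zero_le_one, ENNReal.ofReal_toReal hM_fin]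
    exact le_self_add
  -- basic objects
  set Φ : ℝ × ℝ → ℝ≥0∞ := fun p => (‖v (phi p)‖₊ : ℝ≥0∞) ^ 2 with hΦ
  set g : ℝ × ℝ → ℝ≥0∞ := fun p => (‖fderiv ℝ v (phi p)‖₊ : ℝ≥0∞) ^ 2 with hgdef
  have mΦ : Measurable Φ :=
    ((hv.continuous.comp phi.continuous).nnnorm.measurable.coe_nnreal_ennreal).pow_const 2
  have mg : Measurable g :=
    (((hv.continuous_fderiv one_ne_zero).comp phi.continuous).nnnorm.measurable.coe_nnreal_ennreal).pow_const 2
  set G := ∫⁻ p : ℝ × ℝ, g p with hG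
  set F : ℝ → ℝ≥0∞ := fun t => ∫⁻ u : ℝ, g (u, t) with hF
  have mF : Measurable F := mg.lintegral_prod_left'
  set H : ℝ → ℝ≥0∞ := fun a => ∫⁻ t : ℝ, g (a, t) with hH
  have mH : Measurable H := mg.lintegral_prod_right'
  have hTon1 : (∫⁻ a : ℝ, H a) = G := by
    rw [hG, Measure.volume_eq_prod]
    exact lintegral_lintegral mg.aemeasurable
  have hTon2 : (∫⁻ t : ℝ, F t) = G := by
    have h1 : (∫⁻ t : ℝ, F t)
        = ∫⁻ z : ℝ × ℝ, g (z.2, z.1) ∂((volume : Measure ℝ).prod volume) :=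
      lintegral_lintegral (f := fun t u => g (u, t)) (mg.comp measurable_swap).aemeasurable
    rw [h1]
    have h2 := lintegral_prod_swap (μ := (volume : Measure ℝ)) (ν := volume)
      (f := fun z : ℝ × ℝ => g z)
    simp only [Prod.swap] at h2
    rw [hG, Measure.volume_eq_prod]
    exact h2
  -- the unit square
  set I1 : Set ℝ := Icc (-(1/2) : ℝ) (1/2) with hI1
  set Q : Set (ℝ × ℝ) := I1 ×ˢ I1 with hQdef
  have hI1vol : volume I1 = 1 := by rw [hI1, Real.volume_Icc]; norm_num
  have hQm : MeasurableSet Q := (measurableSet_Icc).prod measurableSet_Icc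
  have hQvol : volume Q = 1 := by
    rw [hQdef, Measure.volume_eq_prod, Measure.prod_prod, hI1vol, mul_one]
  set IQ := ∫⁻ q in Q, Φ q with hIQ
  -- averaged pointwise bound
  have havg : ∀ x : ℝ × ℝ, Φ x ≤ 3 * IQ + 3 * ENNReal.ofReal (|x.2| + 1) * G
      + 3 * ENNReal.ofReal (|x.1| + 1) * F x.2 := by
    intro x
    have h0 : Φ x = ∫⁻ _ in Q, Φ x := by rw [setLIntegral_const, hQvol, mul_one]
    rw [h0]
    have hmono : (∫⁻ _ in Q, Φ x)
        ≤ ∫⁻ q in Q, (3 * Φ q + 3 * ENNReal.ofReal (|x.2| + 1) * H q.1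
            + 3 * ENNReal.ofReal (|x.1| + 1) * F x.2) := by
      refine setLIntegral_mono' hQm (fun q hq => ?_)
      have hq1 : |q.1| ≤ 1 := by
        have := hq.1; rw [hI1, mem_Icc] at this
        rw [abs_le]; constructor <;> linarith [this.1, this.2]
      have hq2 : |q.2| ≤ 1 := by
        have := hq.2; rw [hI1, mem_Icc] at this
        rw [abs_le]; constructor <;> linarith [this.1, this.2]
      have hkey := key_pointwise hv x.1 x.2 q.1 q.2 hq1 hq2
      simpa only [hΦ, hgdef, hH, hF, Prod.mk.eta] using hkey
    refine hmono.trans ?_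
    have e1 : (∫⁻ q in Q, (3 * Φ q + 3 * ENNReal.ofReal (|x.2| + 1) * H q.1
        + 3 * ENNReal.ofReal (|x.1| + 1) * F x.2))
        = (∫⁻ q in Q, 3 * Φ q) + (∫⁻ q in Q, 3 * ENNReal.ofReal (|x.2| + 1) * H q.1)
          + (∫⁻ _ in Q, 3 * ENNReal.ofReal (|x.1| + 1) * F x.2) := by
      rw [lintegral_add_right _ measurable_const,
        lintegral_add_right _ (show Measurable fun q : ℝ × ℝ =>
          3 * ENNReal.ofReal (|x.2| + 1) * H q.1 from
          measurable_const.mul (mH.comp measurable_fst))]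
    rw [e1]
    have t1 : (∫⁻ q in Q, 3 * Φ q) = 3 * IQ := by
      rw [lintegral_const_mul _ mΦ, hIQ]
    have t2 : (∫⁻ q in Q, 3 * ENNReal.ofReal (|x.2| + 1) * H q.1)
        ≤ 3 * ENNReal.ofReal (|x.2| + 1) * G := by
      rw [lintegral_const_mul _ (show Measurable fun q : ℝ × ℝ => H q.1 from
        mH.comp measurable_fst)]
      refine mul_le_mul_right ?_ _
      have hres : (volume : Measure (ℝ × ℝ)).restrict Q
          = ((volume : Measure ℝ).restrict I1).prod ((volume : Measure ℝ).restrict I1) := by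
        rw [hQdef, Measure.volume_eq_prod, Measure.prod_restrict]
      calc (∫⁻ q in Q, H q.1) = ∫⁻ a in I1, ∫⁻ _ in I1, H a := by
            rw [hres, lintegral_prod _ (show AEMeasurable (fun q : ℝ × ℝ => H q.1)
              (((volume : Measure ℝ).restrict I1).prod ((volume : Measure ℝ).restrict I1)) from
              (mH.comp measurable_fst).aemeasurable)]
        _ = ∫⁻ a in I1, H a := by
            refine lintegral_congr fun a => ?_
            rw [setLIntegral_const, hI1vol, mul_one]
        _ ≤ ∫⁻ a : ℝ, H a := setLIntegral_le_lintegral _ _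
        _ = G := hTon1
    have t3 : (∫⁻ _ in Q, 3 * ENNReal.ofReal (|x.1| + 1) * F x.2)
        = 3 * ENNReal.ofReal (|x.1| + 1) * F x.2 := by
      rw [setLIntegral_const, hQvol, mul_one]
    rw [t1, t3]
    exact add_le_add (add_le_add le_rfl t2) le_rfl
  -- weight function on the product
  set W : ℝ × ℝ → ℝ≥0∞ := fun x => w x.1 * w x.2 with hW
  have mW : Measurable W := (mw.comp measurable_fst).mul (mw.comp measurable_snd)
  -- transfers
  have hLHS : (∫⁻ y : E2, (‖v y‖₊ : ℝ≥0∞) ^ 2 * ENNReal.ofReal (Real.exp (-κ * ‖y‖)))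
      = ∫⁻ p : ℝ × ℝ, Φ p * ENNReal.ofReal (Real.exp (-κ * ‖phi p‖)) := by
    exact ((psi_mp.symm).lintegral_comp_emb psi.symm.measurableEmbedding
      (fun y : E2 => (‖v y‖₊ : ℝ≥0∞) ^ 2 * ENNReal.ofReal (Real.exp (-κ * ‖y‖)))).symm
  have hGrad : (∫⁻ y : E2, (‖fderiv ℝ v y‖₊ : ℝ≥0∞) ^ 2) = G := by
    exact ((psi_mp.symm).lintegral_comp_emb psi.symm.measurableEmbedding
      (fun y : E2 => (‖fderiv ℝ v y‖₊ : ℝ≥0∞) ^ 2)).symm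
  set S : Set (ℝ × ℝ) := {p | ‖phi p‖ ≤ 1} with hS
  set Ball := ∫⁻ p in S, Φ p * ENNReal.ofReal (Real.exp (-‖phi p‖)) with hBall
  have hBallT : (∫⁻ y in {y : E2 | ‖y‖ ≤ 1},
      (‖v y‖₊ : ℝ≥0∞) ^ 2 * ENNReal.ofReal (Real.exp (-‖y‖))) = Ball := by
    rw [hBall]
    exact ((psi_mp.symm).setLIntegral_comp_preimage_emb psi.symm.measurableEmbedding
      (fun y : E2 => (‖v y‖₊ : ℝ≥0∞) ^ 2 * ENNReal.ofReal (Real.exp (-‖y‖)))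
      {y : E2 | ‖y‖ ≤ 1}).symm
  -- square inside ball
  have hIQBall : IQ ≤ ENNReal.ofReal (Real.exp 1) * Ball := by
    have hsub : Q ⊆ S := by
      intro q hq
      have h1 := hq.1; have h2 := hq.2
      rw [hI1, mem_Icc] at h1 h2
      have : |q.1| + |q.2| ≤ 1 := by
        have a1 : |q.1| ≤ 1/2 := abs_le.2 ⟨by linarith [h1.1], h1.2⟩
        have a2 : |q.2| ≤ 1/2 := abs_le.2 ⟨by linarith [h2.1], h2.2⟩
        linarith
      exact le_trans (norm_phi_le q) this
    calc IQ ≤ ∫⁻ q in Q, ENNReal.ofReal (Real.exp 1)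
          * (Φ q * ENNReal.ofReal (Real.exp (-‖phi q‖))) := by
          refine setLIntegral_mono' hQm fun q hq => ?_
          have hn : ‖phi q‖ ≤ 1 := hsub hq
          have h1 : (1 : ℝ≥0∞) ≤ ENNReal.ofReal (Real.exp 1)
              * ENNReal.ofReal (Real.exp (-‖phi q‖)) := by
            rw [← ENNReal.ofReal_mul (Real.exp_nonneg _), ← Real.exp_add]
            exact ENNReal.one_le_ofReal.2 (Real.one_le_exp (by linarith))
          calc Φ q = 1 * Φ q := (one_mul _).symm
            _ ≤ (ENNReal.ofReal (Real.exp 1) * ENNReal.ofReal (Real.exp (-‖phi q‖))) * Φ q :=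
              mul_le_mul_left h1 _
            _ = ENNReal.ofReal (Real.exp 1) * (Φ q * ENNReal.ofReal (Real.exp (-‖phi q‖))) := by
              ring
      _ ≤ ∫⁻ q in S, ENNReal.ofReal (Real.exp 1)
            * (Φ q * ENNReal.ofReal (Real.exp (-‖phi q‖))) := lintegral_mono_set hsub
      _ = ENNReal.ofReal (Real.exp 1) * Ball := by
          rw [lintegral_const_mul _ (show Measurable fun q : ℝ × ℝ =>
            Φ q * ENNReal.ofReal (Real.exp (-‖phi q‖)) from mΦ.mul
            ((continuous_norm.comp phi.continuous).neg.rexp.measurable.ennreal_ofReal)), hBall]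
  -- weight comparison on the left
  have hwcomp : ∀ p : ℝ × ℝ, ENNReal.ofReal (Real.exp (-κ * ‖phi p‖)) ≤ W p := by
    intro p
    rw [hW]
    simp only
    rw [hw]
    simp only
    rw [← ENNReal.ofReal_mul (Real.exp_nonneg _), ← Real.exp_add]
    refine ENNReal.ofReal_le_ofReal (Real.exp_le_exp.2 ?_)
    have h1 := norm_phi_ge p
    rw [hcdef]
    nlinarith [hκ]
  have hLHS2 : (∫⁻ p : ℝ × ℝ, Φ p * ENNReal.ofReal (Real.exp (-κ * ‖phi p‖)))
      ≤ ∫⁻ p : ℝ × ℝ, Φ p * W p :=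
    lintegral_mono fun p => mul_le_mul_right (hwcomp p) _
  -- main weighted estimate
  have hmain : (∫⁻ p : ℝ × ℝ, Φ p * W p)
      ≤ 3 * (Bc * Bc) * IQ + (3 * (Bc * Ac) + 3 * Ac) * G := by
    have step1 : (∫⁻ p : ℝ × ℝ, Φ p * W p)
        ≤ ∫⁻ p : ℝ × ℝ, ((3 * IQ) * W p + (3 * G) * (ENNReal.ofReal (|p.2| + 1) * W p)
            + 3 * ((ENNReal.ofReal (|p.1| + 1) * w p.1) * (w p.2 * F p.2))) := by
      refine lintegral_mono fun p => ?_
      refine le_trans (mul_le_mul_left (havg p) _) ?_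
      rw [add_mul, add_mul]
      refine add_le_add (add_le_add (le_of_eq (by ring)) (le_of_eq (by ring))) ?_
      refine le_of_eq ?_
      rw [hW]; ring
    refine step1.trans ?_
    have mh1 : Measurable fun t : ℝ => ENNReal.ofReal (|t| + 1) :=
      (continuous_abs.add continuous_const).measurable.ennreal_ofReal
    have hsplit : (∫⁻ p : ℝ × ℝ, ((3 * IQ) * W p
          + (3 * G) * (ENNReal.ofReal (|p.2| + 1) * W p)
          + 3 * ((ENNReal.ofReal (|p.1| + 1) * w p.1) * (w p.2 * F p.2))))
        = (∫⁻ p : ℝ × ℝ, (3 * IQ) * W p)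
          + (∫⁻ p : ℝ × ℝ, (3 * G) * (ENNReal.ofReal (|p.2| + 1) * W p))
          + (∫⁻ p : ℝ × ℝ, 3 * ((ENNReal.ofReal (|p.1| + 1) * w p.1) * (w p.2 * F p.2))) := by
      rw [lintegral_add_right _ (show Measurable fun p : ℝ × ℝ =>
          3 * ((ENNReal.ofReal (|p.1| + 1) * w p.1) * (w p.2 * F p.2)) from
          measurable_const.mul
          (((mh1.comp measurable_fst).mul (mw.comp measurable_fst)).mul
            ((mw.comp measurable_snd).mul (mF.comp measurable_snd)))),
        lintegral_add_right _ (show Measurable fun p : ℝ × ℝ =>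
          (3 * G) * (ENNReal.ofReal (|p.2| + 1) * W p) from
          measurable_const.mul ((mh1.comp measurable_snd).mul mW))]
    rw [hsplit]
    have hWint : (∫⁻ p : ℝ × ℝ, W p) = Bc * Bc := by
      rw [hW, Measure.volume_eq_prod, hBc]
      exact lintegral_prod_mul mw.aemeasurable mw.aemeasurable
    have T1 : (∫⁻ p : ℝ × ℝ, (3 * IQ) * W p) = 3 * (Bc * Bc) * IQ := by
      rw [lintegral_const_mul _ mW, hWint]; ring
    have T2 : (∫⁻ p : ℝ × ℝ, (3 * G) * (ENNReal.ofReal (|p.2| + 1) * W p))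
        = 3 * (Bc * Ac) * G := by
      rw [lintegral_const_mul _ (show Measurable fun p : ℝ × ℝ =>
        ENNReal.ofReal (|p.2| + 1) * W p from (mh1.comp measurable_snd).mul mW)]
      have : (∫⁻ p : ℝ × ℝ, ENNReal.ofReal (|p.2| + 1) * W p)
          = ∫⁻ p : ℝ × ℝ, w p.1 * (ENNReal.ofReal (|p.2| + 1) * w p.2) := by
        refine lintegral_congr fun p => ?_
        rw [hW]; ring
      rw [this, Measure.volume_eq_prod,
        lintegral_prod_mul (g := fun t => ENNReal.ofReal (|t| + 1) * w t) mw.aemeasurable ((mh1.mul mw).aemeasurable)]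
      have : (∫⁻ t : ℝ, ENNReal.ofReal (|t| + 1) * w t) = Ac := by
        rw [hAc]
        refine lintegral_congr fun t => ?_
        rw [hw]
        simp only
        rw [← ENNReal.ofReal_mul (by positivity)]
      rw [this, hBc]; ring
    have T3 : (∫⁻ p : ℝ × ℝ, 3 * ((ENNReal.ofReal (|p.1| + 1) * w p.1) * (w p.2 * F p.2)))
        ≤ 3 * Ac * G := by
      rw [lintegral_const_mul _ (show Measurable fun p : ℝ × ℝ =>
        (ENNReal.ofReal (|p.1| + 1) * w p.1) * (w p.2 * F p.2) from
        ((mh1.comp measurable_fst).mul (mw.comp measurable_fst)).mul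
        ((mw.comp measurable_snd).mul (mF.comp measurable_snd)))]
      rw [Measure.volume_eq_prod,
        lintegral_prod_mul (f := fun t => ENNReal.ofReal (|t| + 1) * w t) (g := fun t => w t * F t) ((mh1.mul mw).aemeasurable) ((mw.mul mF).aemeasurable)]
      have e1 : (∫⁻ t : ℝ, ENNReal.ofReal (|t| + 1) * w t) = Ac := by
        rw [hAc]
        refine lintegral_congr fun t => ?_
        rw [hw]
        simp only
        rw [← ENNReal.ofReal_mul (by positivity)]
      have e2 : (∫⁻ t : ℝ, w t * F t) ≤ G := by
        refine le_trans (lintegral_mono fun t => ?_) hTon2.le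
        exact mul_le_of_le_one_left zero_le (hwle1 t)
      rw [e1, mul_assoc]
      exact mul_le_mul_right (mul_le_mul' le_rfl e2) 3
    rw [T1, T2]
    refine (add_le_add le_rfl T3).trans (le_of_eq (by ring))
  -- assemble
  rw [hLHS, hGrad, hBallT]
  calc (∫⁻ p : ℝ × ℝ, Φ p * ENNReal.ofReal (Real.exp (-κ * ‖phi p‖)))
      ≤ 3 * (Bc * Bc) * IQ + (3 * (Bc * Ac) + 3 * Ac) * G := hLHS2.trans hmain
    _ ≤ 3 * (Bc * Bc) * (ENNReal.ofReal (Real.exp 1) * Ball)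
        + (3 * (Bc * Ac) + 3 * Ac) * G :=
        add_le_add (mul_le_mul_right hIQBall _) le_rfl
    _ ≤ M * Ball + M * G := by
        refine add_le_add ?_ (mul_le_mul_left ?_ _)
        · rw [← mul_assoc]
          exact mul_le_mul_left (le_trans (le_of_eq rfl) (hM ▸ le_add_right le_rfl)) _
        · exact hM ▸ le_add_left le_rfl
    _ = M * (G + Ball) := by ring
    _ ≤ ENNReal.ofReal (M.toReal + 1) * (G + Ball) := mul_le_mul_left hMC _
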